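/- Let p₁ be a positive integer, m ≥ 2, and I₁ = (x^{p₁}, y^{p₁})(x^{(m+1)p₁}, y^{(m+1)p₁}) in K[x,y]. For every k ≥ m, the minimal number of generators of I₁^k is k(m+2)+1. -/

import Mathlib

open MvPolynomial

/-- The minimal number of generators of an ideal. -/
noncomputable def mu {R : Type*} [CommRing R] (I : Ideal R) : ℕ :=
  sInf {n | ∃ s : Finset R, s.card = n ∧ Ideal.span (s : Set R) = I}

/-- An ideal of `K[x,y]` is a monomial ideal if it is generated by monomials. -/
def IsMonomialIdeal {K : Type*} [Field K] (I : Ideal (MvPolynomial (Fin 2) K)) : Prop :=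
  ∃ G : Set (Fin 2 →₀ ℕ), I = Ideal.span ((fun d => monomial d (1 : K)) '' G)

section Aux
variable {K : Type*} [Field K]

/-- The standard monomial `x^(p a) y^(p (D - a))`. -/
noncomputable def tmon (K : Type*) [Field K] (p D a : ℕ) : MvPolynomial (Fin 2) K :=
  X 0 ^ (p * a) * X 1 ^ (p * (D - a))

lemma tmon_eq_monomial (p D a : ℕ) :
    tmon K p D a = monomial (Finsupp.single 0 (p*a) + Finsupp.single 1 (p*(D-a))) (1:K) := by
  rw [tmon, X_pow_eq_monomial, X_pow_eq_monomial, monomial_mul, one_mul]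

lemma tmon_injOn (p D : ℕ) (hp : 0 < p) : Set.InjOn (tmon K p D) {a | a ≤ D} := by
  intro a _ b _ h
  rw [tmon_eq_monomial, tmon_eq_monomial, monomial_eq_monomial_iff] at h
  rcases h with ⟨h, -⟩ | ⟨h, -⟩
  · have := DFunLike.congr_fun h (0 : Fin 2)
    simp [Finsupp.single_apply] at this
    rcases this with h | h
    · exact h
    · omega
  · exact absurd h one_ne_zero

lemma rep (m k a : ℕ) (hm : 2 ≤ m) (hk : m ≤ k) (ha : a ≤ k * (m+2)) :
    ∃ i j l n : ℕ, i + j + l + n = k ∧ a = (m+2)*i + (m+1)*j + l := by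
  set q := a / (m+2) with hq
  set r := a % (m+2) with hr
  have hdm : (m+2) * q + r = a := Nat.div_add_mod a (m+2)
  have hrlt : r < m + 2 := Nat.mod_lt _ (by omega)
  have hqk : q ≤ k := by
    have h1 : a / (m+2) ≤ (k * (m+2)) / (m+2) := Nat.div_le_div_right ha
    rwa [Nat.mul_div_cancel k (by omega : 0 < m+2)] at h1
  by_cases hqr : q + r ≤ k
  · exact ⟨q, 0, r, k - q - r, by omega, by omega⟩
  · have hr1 : 1 ≤ r := by omega
    have haD : a < k * (m+2) := by
      rcases Nat.lt_or_ge a (k*(m+2)) with h | h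
      · exact h
      · have heq : a = k * (m+2) := le_antisymm ha h
        have : r = 0 := by rw [hr, heq]; exact Nat.mul_mod_left k (m+2)
        omega
    have hqk' : q + 1 ≤ k := by
      have : a / (m+2) < k := (Nat.div_lt_iff_lt_mul (by omega : 0 < m+2)).mpr haD
      omega
    refine ⟨q + r - (m+1), m + 2 - r, 0, k - (q+1), by omega, ?_⟩
    have hi : (q + r - (m+1)) + (m + 2 - r) = q + 1 := by omega
    have h1 : (m+2) * (q+1) = (m+2)*(q + r - (m+1)) + (m+2)*(m+2-r) := by
      rw [← hi]; ring
    have h2 : (m+2) * (m+2-r) = (m+1)*(m+2-r) + (m+2-r) := by ring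
    have h3 : (m+2) * (q+1) = (m+2)*q + (m+2) := by ring
    omega

/-- The ideal `I₁ = (x^p, y^p)(x^{(m+1)p}, y^{(m+1)p})`. -/
noncomputable def I1 (K : Type*) [Field K] (m p : ℕ) : Ideal (MvPolynomial (Fin 2) K) :=
  Ideal.span {(X 0 : MvPolynomial (Fin 2) K) ^ p, X 1 ^ p} *
    Ideal.span {(X 0 : MvPolynomial (Fin 2) K) ^ ((m + 1) * p), X 1 ^ ((m + 1) * p)}

/-- The span of the standard monomials of degree `n (m+2)` (scaled by `p`). -/
noncomputable def spanT (K : Type*) [Field K] (m p n : ℕ) : Ideal (MvPolynomial (Fin 2) K) :=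
  Ideal.span (tmon K p (n*(m+2)) '' {a | a ≤ n*(m+2)})

lemma tmon_mem_pow (m p k a : ℕ) (hm : 2 ≤ m) (hk : m ≤ k) (ha : a ≤ k*(m+2)) :
    tmon K p (k*(m+2)) a ∈ (I1 K m p) ^ k := by
  obtain ⟨i, j, l, n, hsum, hrep⟩ := rep m k a hm hk ha
  have g1 : (X 0 : MvPolynomial (Fin 2) K) ^ ((m+2)*p) ∈ I1 K m p := by
    have := Ideal.mul_mem_mul
      (Ideal.subset_span (Set.mem_insert _ _) :
        (X 0 : MvPolynomial (Fin 2) K) ^ p ∈ Ideal.span {X 0 ^ p, X 1 ^ p})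
      (Ideal.subset_span (Set.mem_insert _ _) :
        (X 0 : MvPolynomial (Fin 2) K) ^ ((m+1)*p) ∈ Ideal.span {X 0 ^ ((m+1)*p), X 1 ^ ((m+1)*p)})
    have hxx : (X 0 : MvPolynomial (Fin 2) K) ^ p * X 0 ^ ((m+1)*p) = X 0 ^ ((m+2)*p) := by
      rw [← pow_add]; ring_nf
    rwa [hxx] at this
  have g2 : (X 0 : MvPolynomial (Fin 2) K) ^ ((m+1)*p) * X 1 ^ p ∈ I1 K m p := by
    have := Ideal.mul_mem_mul
      (Ideal.subset_span (Set.mem_insert_of_mem _ rfl) :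
        (X 1 : MvPolynomial (Fin 2) K) ^ p ∈ Ideal.span {X 0 ^ p, X 1 ^ p})
      (Ideal.subset_span (Set.mem_insert _ _) :
        (X 0 : MvPolynomial (Fin 2) K) ^ ((m+1)*p) ∈ Ideal.span {X 0 ^ ((m+1)*p), X 1 ^ ((m+1)*p)})
    have hxx : (X 1 : MvPolynomial (Fin 2) K) ^ p * X 0 ^ ((m+1)*p)
        = X 0 ^ ((m+1)*p) * X 1 ^ p := mul_comm _ _
    rwa [hxx] at this
  have g3 : (X 0 : MvPolynomial (Fin 2) K) ^ p * X 1 ^ ((m+1)*p) ∈ I1 K m p := by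
    exact Ideal.mul_mem_mul
      (Ideal.subset_span (Set.mem_insert _ _))
      (Ideal.subset_span (Set.mem_insert_of_mem _ rfl))
  have g4 : (X 1 : MvPolynomial (Fin 2) K) ^ ((m+2)*p) ∈ I1 K m p := by
    have := Ideal.mul_mem_mul
      (Ideal.subset_span (Set.mem_insert_of_mem _ rfl) :
        (X 1 : MvPolynomial (Fin 2) K) ^ p ∈ Ideal.span {X 0 ^ p, X 1 ^ p})
      (Ideal.subset_span (Set.mem_insert_of_mem _ rfl) :
        (X 1 : MvPolynomial (Fin 2) K) ^ ((m+1)*p) ∈ Ideal.span {X 0 ^ ((m+1)*p), X 1 ^ ((m+1)*p)})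
    have hxx : (X 1 : MvPolynomial (Fin 2) K) ^ p * X 1 ^ ((m+1)*p) = X 1 ^ ((m+2)*p) := by
      rw [← pow_add]; ring_nf
    rwa [hxx] at this
  have hb : k*(m+2) - a = j + (m+1)*l + (m+2)*n := by
    have h1 : (m+2)*i + (m+1)*j + l + (j + (m+1)*l + (m+2)*n) = (m+2)*(i+j+l+n) := by ring
    have h2 : (m+2)*(i+j+l+n) = (m+2)*k := by rw [hsum]
    have h3 : (m+2)*k = k*(m+2) := by ring
    omega
  have key : tmon K p (k*(m+2)) a =
      ((X 0 : MvPolynomial (Fin 2) K) ^ ((m+2)*p))^i * ((X 0 ^ ((m+1)*p) * X 1 ^ p))^j *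
        ((X 0 ^ p * X 1 ^ ((m+1)*p)))^l * ((X 1 : MvPolynomial (Fin 2) K) ^ ((m+2)*p))^n := by
    rw [tmon, hb, hrep]; ring
  rw [key]
  have h1 : ((X 0 : MvPolynomial (Fin 2) K) ^ ((m+2)*p))^i ∈ (I1 K m p)^i := Ideal.pow_mem_pow g1 i
  have h2 : ((X 0 : MvPolynomial (Fin 2) K) ^ ((m+1)*p) * X 1 ^ p)^j ∈ (I1 K m p)^j :=
    Ideal.pow_mem_pow g2 j
  have h3 : ((X 0 : MvPolynomial (Fin 2) K) ^ p * X 1 ^ ((m+1)*p))^l ∈ (I1 K m p)^l :=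
    Ideal.pow_mem_pow g3 l
  have h4 : ((X 1 : MvPolynomial (Fin 2) K) ^ ((m+2)*p))^n ∈ (I1 K m p)^n := Ideal.pow_mem_pow g4 n
  have := Ideal.mul_mem_mul (Ideal.mul_mem_mul (Ideal.mul_mem_mul h1 h2) h3) h4
  rwa [← pow_add, ← pow_add, ← pow_add, hsum] at this

lemma spanT_le_pow (m p k : ℕ) (hm : 2 ≤ m) (hk : m ≤ k) :
    spanT K m p k ≤ (I1 K m p) ^ k := by
  rw [spanT]
  apply Ideal.span_le.mpr
  rintro x ⟨a, ha, rfl⟩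
  exact tmon_mem_pow m p k a hm hk ha

lemma tmon_mul (p D E a b : ℕ) (ha : a ≤ D) (hb : b ≤ E) :
    tmon K p D a * tmon K p E b = tmon K p (D + E) (a + b) := by
  rw [tmon, tmon, tmon]
  have h : D + E - (a + b) = (D - a) + (E - b) := by omega
  rw [h]; ring

lemma I1_le_spanT_one (m p : ℕ) : I1 K m p ≤ spanT K m p 1 := by
  rw [I1, Ideal.span_mul_span']
  apply Ideal.span_le.mpr
  rintro x ⟨u, hu, v, hv, rfl⟩
  beta_reduce
  have hmem : ∀ a : ℕ, a ≤ 1*(m+2) → tmon K p (1*(m+2)) a ∈ spanT K m p 1 := fun a ha =>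
    Ideal.subset_span ⟨a, ha, rfl⟩
  rcases hu with rfl | rfl <;> rcases hv with rfl | rfl
  · have : (X 0 : MvPolynomial (Fin 2) K) ^ p * X 0 ^ ((m+1)*p) = tmon K p (1*(m+2)) (m+2) := by
      have h1 : 1*(m+2) - (m+2) = 0 := by omega
      rw [tmon, h1]; ring
    rw [this]; exact hmem _ (by omega)
  · have : (X 0 : MvPolynomial (Fin 2) K) ^ p * X 1 ^ ((m+1)*p) = tmon K p (1*(m+2)) 1 := by
      rw [tmon]
      have h1 : 1*(m+2) - 1 = m + 1 := by omega
      rw [h1]; ring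
    rw [this]; exact hmem _ (by omega)
  · have : (X 1 : MvPolynomial (Fin 2) K) ^ p * X 0 ^ ((m+1)*p) = tmon K p (1*(m+2)) (m+1) := by
      rw [tmon]
      have h1 : 1*(m+2) - (m+1) = 1 := by omega
      rw [h1]; ring
    rw [this]; exact hmem _ (by omega)
  · have : (X 1 : MvPolynomial (Fin 2) K) ^ p * X 1 ^ ((m+1)*p) = tmon K p (1*(m+2)) 0 := by
      rw [tmon]
      have h1 : 1*(m+2) - 0 = m + 2 := by omega
      rw [h1]; ring
    rw [this]; exact hmem _ (by omega)

lemma pow_le_spanT (m p : ℕ) : ∀ n : ℕ, (I1 K m p) ^ n ≤ spanT K m p n := by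
  intro n
  induction n with
  | zero =>
    rw [pow_zero, Ideal.one_eq_top]
    intro x _
    have h1 : (1 : MvPolynomial (Fin 2) K) ∈ spanT K m p 0 := by
      have : tmon K p (0*(m+2)) 0 = 1 := by rw [tmon]; simp
      exact this ▸ Ideal.subset_span ⟨0, by simp, rfl⟩
    simpa using Ideal.mul_mem_left _ x h1
  | succ n ih =>
    rw [pow_succ]
    calc (I1 K m p)^n * I1 K m p ≤ spanT K m p n * spanT K m p 1 :=
          Ideal.mul_mono ih (I1_le_spanT_one m p)
      _ ≤ spanT K m p (n+1) := by
          rw [spanT, spanT, Ideal.span_mul_span']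
          apply Ideal.span_le.mpr
          rintro x ⟨u, ⟨a, ha, rfl⟩, v, ⟨b, hb, rfl⟩, rfl⟩
          beta_reduce
          rw [tmon_mul p _ _ a b ha hb]
          refine Ideal.subset_span ⟨a + b, ?_, ?_⟩
          · simp only [Set.mem_setOf_eq] at ha hb ⊢
            have hx : (n+1)*(m+2) = n*(m+2) + (m+2) := by ring
            omega
          · have h2 : n*(m+2) + 1*(m+2) = (n+1)*(m+2) := by ring
            rw [h2]

lemma pow_eq_spanT (m p k : ℕ) (hm : 2 ≤ m) (hk : m ≤ k) :
    (I1 K m p) ^ k = spanT K m p k :=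
  le_antisymm (pow_le_spanT m p k) (spanT_le_pow m p k hm hk)

lemma degw_add (u v : Fin 2 →₀ ℕ) : (u+v).degree = u.degree + v.degree := by
  simp [Finsupp.degree_eq_weight_one, map_add]

lemma degw_single (i : Fin 2) (e : ℕ) : (Finsupp.single i e).degree = e := by
  simp [Finsupp.degree_eq_weight_one, Finsupp.weight_apply, Finsupp.sum_single_index]

lemma tmon_isHomogeneous (p D a : ℕ) (ha : a ≤ D) :
    (tmon K p D a) ∈ homogeneousSubmodule (Fin 2) K (p * D) := by
  rw [mem_homogeneousSubmodule, tmon_eq_monomial]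
  apply isHomogeneous_monomial
  rw [degw_add, degw_single, degw_single, ← Nat.mul_add]
  congr 1
  omega

lemma low_mul (d : ℕ) (r f : MvPolynomial (Fin 2) K)
    (hf : ∀ u : Fin 2 →₀ ℕ, u.degree < d → coeff u f = 0) :
    ∀ u : Fin 2 →₀ ℕ, u.degree < d → coeff u (r * f) = 0 := by
  intro u hu
  rw [coeff_mul]
  apply Finset.sum_eq_zero
  intro x hx
  rw [Finset.HasAntidiagonal.mem_antidiagonal] at hx
  have h2 : x.2.degree ≤ u.degree := by
    rw [← hx, degw_add]; omega
  rw [hf x.2 (lt_of_le_of_lt h2 hu), mul_zero]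

lemma low_of_mem_spanT (m p n : ℕ) (f : MvPolynomial (Fin 2) K) (hf : f ∈ spanT K m p n) :
    ∀ u : Fin 2 →₀ ℕ, u.degree < p * (n*(m+2)) → coeff u f = 0 := by
  refine Submodule.span_induction ?_ ?_ ?_ ?_ hf
  · rintro x ⟨a, ha, rfl⟩ u hu
    rw [tmon_eq_monomial, coeff_monomial]
    split
    · next heq =>
      exfalso
      rw [← heq, degw_add, degw_single, degw_single] at hu
      simp only [Set.mem_setOf_eq] at ha
      have : p * a + p * ((n*(m+2)) - a) = p * (n*(m+2)) := by
        rw [← Nat.mul_add]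
        congr 1
        omega
      omega
    · rfl
  · intro u _; exact coeff_zero u
  · intro x y _ _ hx hy u hu
    rw [coeff_add, hx u hu, hy u hu, add_zero]
  · intro r x _ hx u hu
    rw [smul_eq_mul]
    exact low_mul _ r x hx u hu

lemma hc_mul (d : ℕ) (r f : MvPolynomial (Fin 2) K)
    (hf : ∀ u : Fin 2 →₀ ℕ, u.degree < d → coeff u f = 0) :
    homogeneousComponent d (r * f) = coeff 0 r • homogeneousComponent d f := by
  ext u
  rw [coeff_smul, coeff_homogeneousComponent, coeff_homogeneousComponent]
  by_cases hu : u.degree = d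
  · simp only [hu, if_pos rfl]
    rw [coeff_mul]
    apply Finset.sum_eq_single_of_mem (0, u)
    · rw [Finset.HasAntidiagonal.mem_antidiagonal]; simp
    · intro x hx hne
      rw [Finset.HasAntidiagonal.mem_antidiagonal] at hx
      by_cases hlt : x.2.degree < d
      · rw [hf x.2 hlt, mul_zero]
      · exfalso
        have hdeg : x.1.degree + x.2.degree = d := by rw [← degw_add, hx, hu]
        have h1 : x.1.degree = 0 := by omega
        have h10 : x.1 = 0 := (Finsupp.degree_eq_zero_iff _).mp h1
        have h2 : x.2 = u := by rw [h10, zero_add] at hx; exact hx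
        exact hne (Prod.ext h10 h2)
  · simp [hu]

lemma card_ge (m p k : ℕ) (hp : 0 < p) (s : Finset (MvPolynomial (Fin 2) K))
    (hspan : Ideal.span (s : Set (MvPolynomial (Fin 2) K)) = spanT K m p k) :
    k*(m+2) + 1 ≤ s.card := by
  classical
  set D := k*(m+2) with hD
  set d := p * D with hd
  set φ : MvPolynomial (Fin 2) K →ₗ[K] MvPolynomial (Fin 2) K :=
    homogeneousComponent d with hφ
  set W := Submodule.span K (φ '' (s : Set (MvPolynomial (Fin 2) K))) with hW
  have hlow : ∀ g ∈ s, ∀ u : Fin 2 →₀ ℕ, u.degree < d → coeff u g = 0 := by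
    intro g hg
    exact low_of_mem_spanT m p k g (hspan ▸ Ideal.subset_span hg)
  have hmapsto : ∀ f ∈ spanT K m p k, φ f ∈ W := by
    intro f hf
    rw [← hspan] at hf
    obtain ⟨c, -, hc⟩ := Submodule.mem_span_finset.mp hf
    have heq : φ f = ∑ g ∈ s, coeff 0 (c g) • φ g := by
      rw [← hc, map_sum]
      apply Finset.sum_congr rfl
      intro g hg
      rw [smul_eq_mul]
      exact hc_mul d (c g) g (hlow g hg)
    rw [heq]
    exact Submodule.sum_mem _ fun g hg =>
      Submodule.smul_mem _ _ (Submodule.subset_span ⟨g, hg, rfl⟩)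
  have htW : ∀ a : ℕ, a ≤ D → tmon K p D a ∈ W := by
    intro a ha
    have h1 : tmon K p D a ∈ spanT K m p k := Ideal.subset_span ⟨a, ha, rfl⟩
    have h2 : φ (tmon K p D a) = tmon K p D a := by
      rw [hφ]
      rw [homogeneousComponent_of_mem (tmon_isHomogeneous p D a ha), if_pos rfl]
    rw [← h2]; exact hmapsto _ h1
  -- linear independence of the monomials
  set w : Fin (D+1) → (Fin 2 →₀ ℕ) :=
    fun a => Finsupp.single 0 (p*(a:ℕ)) + Finsupp.single 1 (p*(D-(a:ℕ))) with hw
  have hwinj : Function.Injective w := by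
    intro a b h
    have heq : tmon K p D (a:ℕ) = tmon K p D (b:ℕ) := by
      rw [tmon_eq_monomial, tmon_eq_monomial, hw] at *
      exact congrArg (fun u => monomial u (1:K)) h
    have := tmon_injOn p D hp (Nat.lt_succ_iff.mp a.2) (Nat.lt_succ_iff.mp b.2) heq
    exact Fin.ext this
  have hli : LinearIndependent K (fun a : Fin (D+1) => tmon K p D (a:ℕ)) := by
    have h1 : LinearIndependent K ((basisMonomials (Fin 2) K) ∘ w) :=
      (basisMonomials (Fin 2) K).linearIndependent.comp w hwinj
    have h2 : ((basisMonomials (Fin 2) K) ∘ w) = fun a : Fin (D+1) => tmon K p D (a:ℕ) := by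
      funext a
      rw [Function.comp_apply, coe_basisMonomials, tmon_eq_monomial]
    rwa [h2] at h1
  -- move into W
  set v : Fin (D+1) → W := fun a => ⟨tmon K p D (a:ℕ), htW _ (Nat.lt_succ_iff.mp a.2)⟩ with hv
  have hliv : LinearIndependent K v := by
    apply LinearIndependent.of_comp W.subtype
    convert hli
    rfl
  have hfin : FiniteDimensional K W := by
    rw [hW]
    exact FiniteDimensional.span_of_finite K ((s.finite_toSet).image φ)
  have hcard : D + 1 ≤ Module.finrank K W := by
    have := hliv.fintype_card_le_finrank
    simpa using this
  have hrank : Module.finrank K W ≤ s.card := by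
    have h1 : (φ '' (s : Set (MvPolynomial (Fin 2) K))) = ((s.image φ : Finset _) : Set _) := by
      rw [Finset.coe_image]
    have h2 : Module.finrank K W ≤ (s.image φ).card := by
      rw [hW, h1]
      exact finrank_span_finset_le_card (s.image φ)
    exact le_trans h2 (Finset.card_image_le)
  omega

end Aux

theorem stmt6 (K : Type*) [Field K] (m p1 : ℕ) (hm : 2 ≤ m) (hp1 : 0 < p1) :
    ∀ k : ℕ, m ≤ k →
      mu ((Ideal.span {(X 0 : MvPolynomial (Fin 2) K) ^ p1, X 1 ^ p1} *
        Ideal.span {(X 0 : MvPolynomial (Fin 2) K) ^ ((m + 1) * p1), X 1 ^ ((m + 1) * p1)}) ^ k) =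
      k * (m + 2) + 1 := by
  classical
  intro k hk
  have hpow : (Ideal.span {(X 0 : MvPolynomial (Fin 2) K) ^ p1, X 1 ^ p1} *
        Ideal.span {(X 0 : MvPolynomial (Fin 2) K) ^ ((m + 1) * p1), X 1 ^ ((m + 1) * p1)}) ^ k
      = spanT K m p1 k := by
    rw [show (Ideal.span {(X 0 : MvPolynomial (Fin 2) K) ^ p1, X 1 ^ p1} *
        Ideal.span {(X 0 : MvPolynomial (Fin 2) K) ^ ((m + 1) * p1), X 1 ^ ((m + 1) * p1)})
      = I1 K m p1 from rfl]
    exact pow_eq_spanT m p1 k hm hk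
  rw [hpow, mu]
  set D := k*(m+2) with hD
  apply IsLeast.csInf_eq
  constructor
  · -- D+1 is achieved
    refine ⟨(Finset.range (D+1)).image (tmon K p1 D), ?_, ?_⟩
    · rw [Finset.card_image_of_injOn, Finset.card_range]
      intro a ha b hb h
      exact tmon_injOn p1 D hp1
        (by simpa using Nat.lt_succ_iff.mp (Finset.mem_range.mp ha))
        (by simpa using Nat.lt_succ_iff.mp (Finset.mem_range.mp hb)) h
    · rw [Finset.coe_image, Finset.coe_range, spanT]
      congr 1
      congr 1
      ext a
      simp [Nat.lt_succ_iff]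
      exact Iff.rfl
  · rintro n ⟨s, rfl, hspan⟩
    exact card_ge m p1 k hp1 s hspan
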